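/- Fix an index i and let C_i := (1 + R_i · Σ_{j≠i} 1/(d_{ij} - R_i))^{-1}, where R_i = (1/3)·min_{j≠i} d_{ij}. Then 0 < C_i < 1 and for every x with 0 < r_i(x) ≤ R_i one has C_i · r_i(x) ≤ w(x) < r_i(x). -/

import Mathlib

set_option maxHeartbeats 1000000

open Finset

/-- With `Cᵢ = (1 + Rᵢ·∑_{j≠i} 1/(dᵢⱼ - Rᵢ))⁻¹` and `Rᵢ = (1/3)·min_{j≠i} dᵢⱼ`,
one has `0 < Cᵢ < 1` and, for every `x` with `0 < rᵢ(x) ≤ Rᵢ`, `Cᵢ·rᵢ(x) ≤ w(x) < rᵢ(x)`. -/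
theorem weight_comparable_near_puncture {n N : ℕ} (hN : 2 ≤ N)
    (p : Fin N → EuclideanSpace ℝ (Fin n)) (hp : Function.Injective p)
    (i : Fin N) (hne : (Finset.univ.erase i).Nonempty)
    (Ri Ci : ℝ)
    (hRi : Ri = (1/3) * (Finset.univ.erase i).inf' hne (fun j => dist (p i) (p j)))
    (hCi : Ci = (1 + Ri * ∑ j ∈ Finset.univ.erase i, (dist (p i) (p j) - Ri)⁻¹)⁻¹) :
    (0 < Ci ∧ Ci < 1) ∧
    ∀ x : EuclideanSpace ℝ (Fin n), 0 < dist x (p i) → dist x (p i) ≤ Ri →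
      Ci * dist x (p i) ≤ (∑ j, (dist x (p j))⁻¹)⁻¹ ∧
      (∑ j, (dist x (p j))⁻¹)⁻¹ < dist x (p i) := by
  set S : ℝ := ∑ j ∈ Finset.univ.erase i, (dist (p i) (p j) - Ri)⁻¹ with hS
  -- distances positive
  have hd : ∀ j ∈ Finset.univ.erase i, 0 < dist (p i) (p j) := by
    intro j hj
    have hji : j ≠ i := (Finset.mem_erase.mp hj).1
    exact dist_pos.mpr fun h => hji (hp h).symm
  have hinf : 0 < (Finset.univ.erase i).inf' hne (fun j => dist (p i) (p j)) := by
    obtain ⟨j, hj, hjval⟩ := Finset.exists_mem_eq_inf' hne (fun j => dist (p i) (p j))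
    rw [hjval]; exact hd j hj
  have hRipos : 0 < Ri := by rw [hRi]; positivity
  have hdR : ∀ j ∈ Finset.univ.erase i, 0 < dist (p i) (p j) - Ri := by
    intro j hj
    have h1 : (Finset.univ.erase i).inf' hne (fun j => dist (p i) (p j)) ≤ dist (p i) (p j) :=
      Finset.inf'_le _ hj
    have := hd j hj
    nlinarith [hRi]
  have hSpos : 0 < S := by
    apply Finset.sum_pos _ hne
    intro j hj; exact inv_pos.mpr (hdR j hj)
  have hden : 1 < 1 + Ri * S := by nlinarith
  have hCipos : 0 < Ci := by rw [hCi]; exact inv_pos.mpr (by linarith)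
  refine ⟨⟨hCipos, ?_⟩, ?_⟩
  · rw [hCi]
    exact inv_lt_one_of_one_lt₀ hden
  intro x hr hrR
  set r : ℝ := dist x (p i) with hrdef
  have hdx : ∀ j ∈ Finset.univ.erase i, dist (p i) (p j) - Ri ≤ dist x (p j) := by
    intro j hj
    have htri : dist (p i) (p j) ≤ dist (p i) x + dist x (p j) := dist_triangle _ _ _
    have : dist (p i) x = r := dist_comm (p i) x
    linarith
  have hdxpos : ∀ j ∈ Finset.univ.erase i, 0 < dist x (p j) := fun j hj =>
    lt_of_lt_of_le (hdR j hj) (hdx j hj)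
  have hsplit : (∑ j, (dist x (p j))⁻¹) =
      r⁻¹ + ∑ j ∈ Finset.univ.erase i, (dist x (p j))⁻¹ :=
    (Finset.add_sum_erase _ _ (Finset.mem_univ i)).symm
  have htailpos : 0 < ∑ j ∈ Finset.univ.erase i, (dist x (p j))⁻¹ :=
    Finset.sum_pos (fun j hj => inv_pos.mpr (hdxpos j hj)) hne
  have hTpos : 0 < ∑ j, (dist x (p j))⁻¹ := by
    rw [hsplit]; have := inv_pos.mpr hr; linarith
  constructor
  · -- lower bound
    have htail_le : ∑ j ∈ Finset.univ.erase i, (dist x (p j))⁻¹ ≤ S := by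
      apply Finset.sum_le_sum
      intro j hj
      exact inv_anti₀ (hdR j hj) (hdx j hj)
    have hT_le : (∑ j, (dist x (p j))⁻¹) ≤ r⁻¹ * (1 + Ri * S) := by
      rw [hsplit]
      have h1 : S ≤ r⁻¹ * Ri * S := by
        have : 1 ≤ r⁻¹ * Ri := (one_le_inv_mul₀ hr).mpr (by linarith)
        nlinarith
      have : r⁻¹ * (1 + Ri * S) = r⁻¹ + r⁻¹ * Ri * S := by ring
      rw [this]; linarith
    have h2 : (r⁻¹ * (1 + Ri * S))⁻¹ ≤ (∑ j, (dist x (p j))⁻¹)⁻¹ :=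
      inv_anti₀ hTpos hT_le
    have h3 : (r⁻¹ * (1 + Ri * S))⁻¹ = Ci * r := by
      rw [hCi, mul_inv, inv_inv]; ring
    linarith
  · -- upper bound
    have : r⁻¹ < ∑ j, (dist x (p j))⁻¹ := by rw [hsplit]; linarith
    calc (∑ j, (dist x (p j))⁻¹)⁻¹ < (r⁻¹)⁻¹ := by
          exact inv_strictAnti₀ (inv_pos.mpr hr) this
      _ = r := inv_inv r
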